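/- Let k ≥ 1 and let d_1, …, d_k be natural numbers with each d_i ≥ 1. Set G := ∏_{i=1}^{k} F_{d_i} in ℤ[X,Y], where F_d := ∏_{i=0}^{d} (1 + (d−i)·X + i·Y). Then for every natural number j with 0 ≤ j ≤ ∑_{i=1}^{k} (d_i + 1), the homogeneous component of degree j of G (with X and Y each of degree 1) is a nonzero polynomial, and it equals P_j(e₁, e₂) for some two-variable polynomial P_j ∈ ℤ[S,T] all of whose coefficients are nonnegative, where e₁ = X+Y and e₂ = X·Y. In Chern-class terms: every Chern class c_j of the direct sum ⨁_{i=1}^k Sym^{d_i} of symmetric powers of a rank-2 bundle, for j up to the rank ∑(d_i+1), is a nonzero polynomial in c₁, c₂ with nonnegative integer coefficients. -/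

import Mathlib

open MvPolynomial Finset

/-- `Xp` is the first Chern root. -/
noncomputable def Xp : MvPolynomial (Fin 2) ℤ := MvPolynomial.X 0
/-- `Yp` is the second Chern root. -/
noncomputable def Yp : MvPolynomial (Fin 2) ℤ := MvPolynomial.X 1

/-- `F d` is the total Chern class of `Sym^d` of a rank-2 bundle with Chern
roots `X`, `Y`. -/
noncomputable def F (d : ℕ) : MvPolynomial (Fin 2) ℤ :=
  ∏ i ∈ Finset.range (d + 1), (1 + C ((d : ℤ) - (i : ℤ)) * Xp + C (i : ℤ) * Yp)

/-- `e₁ = X + Y` plays the role of `c₁`. -/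
noncomputable def e1 : MvPolynomial (Fin 2) ℤ := Xp + Yp
/-- `e₂ = X·Y` plays the role of `c₂`. -/
noncomputable def e2 : MvPolynomial (Fin 2) ℤ := Xp * Yp

/-! ### Auxiliary definitions -/

/-- The substitution `S ↦ e₁`, `T ↦ e₂`. -/
noncomputable def AA : MvPolynomial (Fin 2) ℤ →ₐ[ℤ] MvPolynomial (Fin 2) ℤ := aeval ![e1, e2]

/-- `Good p` means `p` is obtained from a polynomial with nonnegative coefficients by
substituting `e₁, e₂`. -/
def Good (p : MvPolynomial (Fin 2) ℤ) : Prop :=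
  ∃ Q : MvPolynomial (Fin 2) ℤ, (∀ m, 0 ≤ Q.coeff m) ∧ p = AA Q

lemma good_one : Good 1 := ⟨1, by intro m; simp [coeff_one]; positivity, by simp⟩

lemma good_C (a : ℤ) (ha : 0 ≤ a) : Good (C a) := by
  refine ⟨C a, fun m => ?_, by simp [AA, algebraMap_eq]⟩
  simp only [coeff_C]; split <;> simp [ha]

lemma good_e1 : Good e1 := by
  refine ⟨X 0, fun m => ?_, by simp [AA]⟩
  rw [X, coeff_monomial]; split <;> simp

lemma good_e2 : Good e2 := by
  refine ⟨X 1, fun m => ?_, by simp [AA]⟩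
  rw [X, coeff_monomial]; split <;> simp

lemma good_add {p q} (hp : Good p) (hq : Good q) : Good (p + q) := by
  obtain ⟨P, hP, rfl⟩ := hp; obtain ⟨Q, hQ, rfl⟩ := hq
  exact ⟨P + Q, fun m => by rw [coeff_add]; exact add_nonneg (hP m) (hQ m), by simp⟩

lemma good_mul {p q} (hp : Good p) (hq : Good q) : Good (p * q) := by
  obtain ⟨P, hP, rfl⟩ := hp; obtain ⟨Q, hQ, rfl⟩ := hq
  refine ⟨P * Q, fun m => ?_, by simp⟩
  rw [coeff_mul]
  exact Finset.sum_nonneg fun x _ => mul_nonneg (hP _) (hQ _)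

/-- A single Chern-root factor of `F d`. -/
noncomputable def L (d i : ℕ) : MvPolynomial (Fin 2) ℤ :=
  1 + C ((d : ℤ) - (i : ℤ)) * Xp + C (i : ℤ) * Yp

lemma pair_eq (i r : ℕ) : L (i + r) i * L (i + r) (r) =
    1 + C ((i : ℤ) + r) * e1 + C ((i : ℤ) * r) * e1 ^ 2 + C (((i : ℤ) - r) ^ 2) * e2 := by
  simp only [L, e1, e2, Nat.cast_add, map_add, map_mul, map_sub, map_pow, map_one]
  ring

lemma mid_eq (a : ℕ) : L (a + a) a = 1 + C (a : ℤ) * e1 := by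
  simp only [L, e1]
  push_cast
  ring

lemma good_pair (i r : ℕ) : Good (L (i + r) i * L (i + r) r) := by
  rw [pair_eq]
  refine good_add (good_add (good_add good_one ?_) ?_) ?_
  · exact good_mul (good_C _ (by positivity)) good_e1
  · rw [sq]; exact good_mul (good_C _ (by positivity)) (good_mul good_e1 good_e1)
  · exact good_mul (good_C _ (sq_nonneg _)) good_e2

lemma good_mid (a : ℕ) : Good (L (a + a) a) := by
  rw [mid_eq]
  exact good_add good_one (good_mul (good_C _ (by positivity)) good_e1)

lemma good_Ico : ∀ n a d : ℕ, 2 * a + n = d + 1 →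
    Good (∏ i ∈ Finset.Ico a (a + n), L d i) := by
  intro n
  induction n using Nat.strong_induction_on with
  | _ n ih =>
    match n with
    | 0 => intro a d h; rw [add_zero, Finset.Ico_self, Finset.prod_empty]; exact good_one
    | 1 =>
      intro a d h
      have hd : d = a + a := by omega
      rw [show Finset.Ico a (a+1) = {a} by ext x; simp, Finset.prod_singleton]
      exact hd ▸ good_mid a
    | (m+2) =>
      intro a d h
      have h1 : a ≤ a + m + 1 := by omega
      rw [show a + (m+2) = (a + m + 1) + 1 by omega, Finset.prod_Ico_succ_top (by omega)]
      rw [Finset.prod_eq_prod_Ico_succ_bot (by omega : a < a + m + 1)]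
      have hgood : Good (L d a * L d (a + m + 1)) := by
        rw [show d = a + (a+m+1) by omega]
        exact good_pair a (a + m + 1)
      have hgm : Good (∏ i ∈ Finset.Ico (a+1) (a+m+1), L d i) := by
        rw [show a + m + 1 = a + 1 + m by omega]
        exact ih m (by omega) (a+1) d (by omega)
      rw [mul_right_comm]
      exact good_mul hgood hgm

lemma good_F (d : ℕ) : Good (F d) := by
  have := good_Ico (d+1) 0 d (by omega)
  rw [F, Finset.range_eq_Ico]
  rw [show Finset.Ico 0 (d+1) = Finset.Ico 0 (0 + (d+1)) by rw [zero_add]]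
  exact this

/-! ### Weighted-degree bookkeeping -/

/-- The weight giving `S` degree `1` and `T` degree `2`. -/
def ww : Fin 2 → ℕ := ![1, 2]

lemma weight_ww (m : Fin 2 →₀ ℕ) : Finsupp.weight ww m = m 0 + 2 * m 1 := by
  rw [Finsupp.weight_apply, Finsupp.sum_fintype _ _ (by simp), Fin.sum_univ_two]
  simp [ww, mul_comm]

lemma e1_hom : e1.IsHomogeneous 1 := by
  unfold e1 Xp Yp; exact (isHomogeneous_X _ _).add (isHomogeneous_X _ _)
lemma e2_hom : e2.IsHomogeneous 2 := by
  unfold e2 Xp Yp; exact (isHomogeneous_X _ _).mul (isHomogeneous_X _ _)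

lemma AA_monomial (m : Fin 2 →₀ ℕ) (c : ℤ) :
    AA (monomial m c) = C c * e1 ^ m 0 * e2 ^ m 1 := by
  rw [AA, aeval_monomial]
  rw [Finsupp.prod_fintype _ _ (by simp), Fin.prod_univ_two]
  simp [algebraMap_eq, mul_assoc]

lemma AA_monomial_hom (m : Fin 2 →₀ ℕ) (c : ℤ) :
    (AA (monomial m c)).IsHomogeneous (m 0 + 2 * m 1) := by
  rw [AA_monomial]
  have h1 : (C c * e1 ^ m 0 : MvPolynomial (Fin 2) ℤ).IsHomogeneous (0 + (m 0 * 1)) :=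
    by simpa using (isHomogeneous_C _ c).mul (e1_hom.pow (m 0))
  have h2 := h1.mul (e2_hom.pow (m 1))
  convert h2 using 2
  ring

lemma K1 (j : ℕ) (Q : MvPolynomial (Fin 2) ℤ) :
    homogeneousComponent j (AA Q) =
      AA (weightedHomogeneousComponent ww j Q) := by
  have : (homogeneousComponent j).comp AA.toLinearMap
      = AA.toLinearMap.comp (weightedHomogeneousComponent ww j) := by
    ext m : 1
    apply LinearMap.ext
    intro c
    simp only [LinearMap.comp_apply, AlgHom.toLinearMap_apply, LinearMap.coe_comp,
      Function.comp_apply]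
    have hw : weightedHomogeneousComponent ww j (monomial m c)
        = if j = m 0 + 2 * m 1 then monomial m c else 0 := by
      rw [weightedHomogeneousComponent_of_mem]
      rw [mem_weightedHomogeneousSubmodule]
      exact isWeightedHomogeneous_monomial _ _ _ (weight_ww m)
    change homogeneousComponent j (AA (monomial m c)) =
      AA (weightedHomogeneousComponent ww j (monomial m c))
    rw [hw, homogeneousComponent_of_mem
      ((mem_homogeneousSubmodule (m 0 + 2 * m 1) _).2 (AA_monomial_hom m c))]
    split_ifs with h
    · rfl
    · simp
  exact LinearMap.congr_fun this Q

/-! ### Specialization to one variable -/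

/-- `X ↦ t`, `Y ↦ t`. -/
noncomputable def psi : MvPolynomial (Fin 2) ℤ →ₐ[ℤ] Polynomial ℤ :=
  aeval ![Polynomial.X, Polynomial.X]

/-- `S ↦ 2t`, `T ↦ t²`. -/
noncomputable def chi : MvPolynomial (Fin 2) ℤ →ₐ[ℤ] Polynomial ℤ :=
  aeval ![2 * Polynomial.X, Polynomial.X ^ 2]

lemma psi_comp_AA (p : MvPolynomial (Fin 2) ℤ) : psi (AA p) = chi p := by
  have : psi.comp AA = chi := by
    apply MvPolynomial.algHom_ext
    intro i
    fin_cases i <;>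
      simp [AA, psi, chi, e1, e2, Xp, Yp] <;> ring
  exact congrFun (congrArg DFunLike.coe this) p

lemma psi_F (d : ℕ) : psi (F d) = (1 + Polynomial.C (d : ℤ) * Polynomial.X) ^ (d + 1) := by
  rw [F, map_prod]
  rw [Finset.prod_congr rfl (fun i hi => ?_), Finset.prod_const, Finset.card_range]
  simp only [map_add, map_mul, map_one, psi, aeval_C, algebraMap_eq]
  simp [Xp, Yp]
  ring

lemma chi_coeff_zero (j : ℕ) (Q : MvPolynomial (Fin 2) ℤ)
    (h : ∀ m ∈ Q.support, m 0 + 2 * m 1 ≠ j) : (chi Q).coeff j = 0 := by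
  rw [chi, aeval_def, eval₂_eq]
  rw [Polynomial.finset_sum_coeff]
  apply Finset.sum_eq_zero
  intro m hm
  rw [show (∏ i ∈ m.support, ![2 * Polynomial.X, Polynomial.X ^ 2] i ^ m i)
      = ∏ i : Fin 2, ![2 * Polynomial.X, Polynomial.X ^ 2] i ^ m i from
    Finset.prod_subset (Finset.subset_univ _)
      (by intro x _ hx; simp [Finsupp.notMem_support_iff.mp hx]), Fin.prod_univ_two]
  simp only [Matrix.cons_val_zero, Matrix.cons_val_one, Matrix.head_cons]
  have : ((2 * Polynomial.X) ^ m 0 * (Polynomial.X ^ 2) ^ m 1 : Polynomial ℤ)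
      = Polynomial.C (2 ^ m 0) * Polynomial.X ^ (m 0 + 2 * m 1) := by
    rw [mul_pow, ← pow_mul, map_pow]
    norm_num
    ring
  rw [this, ← mul_assoc, Polynomial.algebraMap_eq, ← Polynomial.C_mul, Polynomial.coeff_C_mul,
    Polynomial.coeff_X_pow, if_neg (fun hh => h m hm hh.symm), mul_zero]

/-! ### Positivity of the coefficients of the one-variable specialization -/

lemma step_mul (p : Polynomial ℤ) (a : ℤ) (ha : 1 ≤ a) (n : ℕ)
    (h0 : ∀ i, 0 ≤ p.coeff i) (h1 : ∀ i ≤ n, 0 < p.coeff i) :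
    (∀ i, 0 ≤ ((1 + Polynomial.C a * Polynomial.X) * p).coeff i) ∧
      (∀ i ≤ n + 1, 0 < ((1 + Polynomial.C a * Polynomial.X) * p).coeff i) := by
  have hc : ∀ i, ((1 + Polynomial.C a * Polynomial.X) * p).coeff i
      = p.coeff i + a * (Polynomial.X * p).coeff i := by
    intro i
    rw [add_mul, one_mul, Polynomial.coeff_add, mul_assoc, Polynomial.coeff_C_mul]
  have hx0 : (Polynomial.X * p : Polynomial ℤ).coeff 0 = 0 := by
    rw [Polynomial.mul_coeff_zero, Polynomial.coeff_X_zero, zero_mul]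
  constructor
  · intro i
    rw [hc]
    cases i with
    | zero => rw [hx0, mul_zero, add_zero]; exact h0 0
    | succ i => rw [Polynomial.coeff_X_mul]
                exact add_nonneg (h0 _) (mul_nonneg (by omega) (h0 i))
  · intro i hi
    rw [hc]
    cases i with
    | zero => rw [hx0, mul_zero, add_zero]; exact h1 0 (by omega)
    | succ i =>
        rw [Polynomial.coeff_X_mul]
        have := h1 i (by omega)
        have := h0 (i+1)
        nlinarith

lemma pow_mul_pos (a : ℤ) (ha : 1 ≤ a) (m : ℕ) (p : Polynomial ℤ) (n : ℕ)
    (h0 : ∀ i, 0 ≤ p.coeff i) (h1 : ∀ i ≤ n, 0 < p.coeff i) :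
    (∀ i, 0 ≤ ((1 + Polynomial.C a * Polynomial.X) ^ m * p).coeff i) ∧
      (∀ i ≤ n + m, 0 < ((1 + Polynomial.C a * Polynomial.X) ^ m * p).coeff i) := by
  induction m with
  | zero => simpa using ⟨h0, h1⟩
  | succ m ih =>
    have h := step_mul _ a ha (n + m) ih.1 ih.2
    have he : (1 + Polynomial.C a * Polynomial.X) ^ (m + 1) * p
        = (1 + Polynomial.C a * Polynomial.X)
          * ((1 + Polynomial.C a * Polynomial.X) ^ m * p) := by
      ring
    rw [he]
    exact ⟨h.1, fun i hi => h.2 i (by omega)⟩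

lemma prod_coeff_pos {k : ℕ} (d : Fin k → ℕ) (hd : ∀ i, 1 ≤ d i) (s : Finset (Fin k)) :
    (∀ i, 0 ≤ (∏ t ∈ s, (1 + Polynomial.C (d t : ℤ) * Polynomial.X) ^ (d t + 1)).coeff i) ∧
      ∀ i ≤ ∑ t ∈ s, (d t + 1),
        0 < (∏ t ∈ s, (1 + Polynomial.C (d t : ℤ) * Polynomial.X) ^ (d t + 1)).coeff i := by
  induction s using Finset.induction with
  | empty =>
      constructor
      · intro i; simp only [Finset.prod_empty, Polynomial.coeff_one]
        split <;> norm_num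
      · intro i hi
        simp only [Finset.sum_empty, Nat.le_zero] at hi
        simp [hi]
  | @insert t s' hnot ih =>
      rw [Finset.prod_insert hnot, Finset.sum_insert hnot]
      have := pow_mul_pos (d t : ℤ) (by exact_mod_cast hd t) (d t + 1) _ _ ih.1 ih.2
      exact ⟨this.1, fun i hi => this.2 i (by omega)⟩

/-- Every Chern class `c_j` of the direct sum `⨁_{i=1}^k Sym^{d_i}` of symmetric
powers of a rank-2 bundle, for `j` up to the rank `∑ (d_i + 1)`, is a nonzero
polynomial in `c₁, c₂` with nonnegative integer coefficients. -/
theorem stmt6 (k : ℕ) (hk : 1 ≤ k) (d : Fin k → ℕ) (hd : ∀ i, 1 ≤ d i)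
    (j : ℕ) (hj : j ≤ ∑ i, (d i + 1)) :
    MvPolynomial.homogeneousComponent j (∏ i, F (d i)) ≠ 0 ∧
    ∃ P : MvPolynomial (Fin 2) ℤ,
      (∀ m, 0 ≤ P.coeff m) ∧
      MvPolynomial.homogeneousComponent j (∏ i, F (d i)) =
        MvPolynomial.aeval ![e1, e2] P := by
  have hG : Good (∏ i, F (d i)) :=
    Finset.prod_induction _ Good (fun _ _ => good_mul) good_one (fun i _ => good_F (d i))
  obtain ⟨Q, hQ, hGQ⟩ := hG
  set P := weightedHomogeneousComponent ww j Q with hP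
  have hPc : ∀ m, 0 ≤ P.coeff m := by
    intro m
    rw [hP, coeff_weightedHomogeneousComponent]
    split
    · exact hQ m
    · exact le_refl 0
  have hHC : homogeneousComponent j (∏ i, F (d i)) = AA P := by
    rw [hGQ, K1]
  refine ⟨?_, P, hPc, by rw [hHC]; rfl⟩
  intro h0
  have hAP : AA P = 0 := by rw [← hHC]; exact h0
  have hchiP : chi P = 0 := by rw [← psi_comp_AA, hAP, map_zero]
  -- the coefficient of `t^j` in `chi Q` vanishes
  have hcoeff : (chi Q).coeff j = 0 := by
    have hsplit : Q = P + (Q - P) := by ring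
    have hzero : (chi (Q - P)).coeff j = 0 := by
      apply chi_coeff_zero
      intro m hm hmj
      rw [mem_support_iff] at hm
      apply hm
      rw [coeff_sub, hP, coeff_weightedHomogeneousComponent,
        if_pos (by rw [weight_ww]; exact hmj), sub_self]
    calc (chi Q).coeff j = (chi (P + (Q - P))).coeff j := by rw [← hsplit]
      _ = (chi P).coeff j + (chi (Q - P)).coeff j := by rw [map_add, Polynomial.coeff_add]
      _ = 0 := by rw [hchiP, hzero]; simp
  -- but that coefficient is positive
  have hpos : 0 < (chi Q).coeff j := by
    have h1 : chi Q = ∏ i, (1 + Polynomial.C (d i : ℤ) * Polynomial.X) ^ (d i + 1) := by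
      rw [← psi_comp_AA, ← hGQ, map_prod]
      exact Finset.prod_congr rfl fun i _ => psi_F (d i)
    rw [h1]
    exact (prod_coeff_pos d hd Finset.univ).2 j hj
  rw [hcoeff] at hpos
  exact lt_irrefl 0 hpos
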